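/- Let A ∈ ℂ^{n×n}, B ∈ ℂ^{n×m}, R ∈ ℂ^{n×n} Hermitian positive semidefinite with (A,B) a reachable (controllable) pair, and suppose R = B Ω B* + A₀ R A₀*, where Ω ∈ ℂ^{m×m} is Hermitian positive definite, A₀ = (I - BΓ)A for some Γ ∈ ℂ^{m×n} with Γ B = I_m, and all eigenvalues of A₀ have modulus strictly less than 1. Then R is positive definite. -/

import Mathlib

open Matrix ComplexOrder

/-- If `(A,B)` is reachable, `Ω > 0`, `Γ B = I`, `A₀ = (I - BΓ)A` has spectrum
in the open unit disc, and the PSD matrix `R` satisfies the Stein equation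
`R = B Ω B* + A₀ R A₀*`, then `R` is positive definite. -/
theorem stmt_8 {n m : ℕ} (A : Matrix (Fin n) (Fin n) ℂ)
    (B : Matrix (Fin n) (Fin m) ℂ)
    (hreach : (Matrix.of fun (i : Fin n) (p : Fin n × Fin m) =>
        (A ^ (p.1 : ℕ) * B) i p.2).rank = n)
    (R : Matrix (Fin n) (Fin n) ℂ) (hR : R.PosSemidef)
    (Ω : Matrix (Fin m) (Fin m) ℂ) (hΩ : Ω.PosDef)
    (Γ : Matrix (Fin m) (Fin n) ℂ) (hΓB : Γ * B = 1)
    (A₀ : Matrix (Fin n) (Fin n) ℂ) (hA₀ : A₀ = (1 - B * Γ) * A)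
    (hstab : ∀ μ : ℂ, μ ∈ spectrum ℂ A₀ → ‖μ‖ < 1)
    (hstein : R = B * Ω * Bᴴ + A₀ * R * A₀ᴴ) :
    R.PosDef := by
  set M : Matrix (Fin n) (Fin n × Fin m) ℂ :=
    Matrix.of fun (i : Fin n) (p : Fin n × Fin m) => (A ^ (p.1 : ℕ) * B) i p.2 with hM
  refine Matrix.PosDef.of_dotProduct_mulVec_pos hR.1 (fun x hx => ?_)
  rcases lt_or_eq_of_le (hR.dotProduct_mulVec_nonneg x) with h | h
  · exact h
  exfalso
  -- step: if yᴴ R y = 0 then Bᴴ y = 0 and (Aᴴ y)ᴴ R (Aᴴ y) = 0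
  have step : ∀ y : Fin n → ℂ, star y ⬝ᵥ R *ᵥ y = 0 →
      Bᴴ *ᵥ y = 0 ∧ star (Aᴴ *ᵥ y) ⬝ᵥ R *ᵥ (Aᴴ *ᵥ y) = 0 := by
    intro y hy
    have hsplit : star y ⬝ᵥ R *ᵥ y
        = star (Bᴴ *ᵥ y) ⬝ᵥ Ω *ᵥ (Bᴴ *ᵥ y)
          + star (A₀ᴴ *ᵥ y) ⬝ᵥ R *ᵥ (A₀ᴴ *ᵥ y) := by
      conv_lhs => rw [hstein]
      simp only [Matrix.add_mulVec, dotProduct_add, ← Matrix.mulVec_mulVec,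
        star_mulVec, Matrix.dotProduct_mulVec, conjTranspose_conjTranspose]
    have h1 : (0:ℂ) ≤ star (Bᴴ *ᵥ y) ⬝ᵥ Ω *ᵥ (Bᴴ *ᵥ y) := hΩ.posSemidef.dotProduct_mulVec_nonneg _
    have h2 : (0:ℂ) ≤ star (A₀ᴴ *ᵥ y) ⬝ᵥ R *ᵥ (A₀ᴴ *ᵥ y) := hR.dotProduct_mulVec_nonneg _
    rw [hy] at hsplit
    have e1 : star (Bᴴ *ᵥ y) ⬝ᵥ Ω *ᵥ (Bᴴ *ᵥ y) = 0 := by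
      have heq : star (Bᴴ *ᵥ y) ⬝ᵥ Ω *ᵥ (Bᴴ *ᵥ y)
          = -(star (A₀ᴴ *ᵥ y) ⬝ᵥ R *ᵥ (A₀ᴴ *ᵥ y)) := by linear_combination -hsplit
      exact le_antisymm (heq ▸ neg_nonpos.mpr h2) h1
    have e2 : star (A₀ᴴ *ᵥ y) ⬝ᵥ R *ᵥ (A₀ᴴ *ᵥ y) = 0 := by
      have heq : star (A₀ᴴ *ᵥ y) ⬝ᵥ R *ᵥ (A₀ᴴ *ᵥ y)
          = -(star (Bᴴ *ᵥ y) ⬝ᵥ Ω *ᵥ (Bᴴ *ᵥ y)) := by linear_combination -hsplit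
      exact le_antisymm (heq ▸ neg_nonpos.mpr h1) h2
    have hBy : Bᴴ *ᵥ y = 0 := by
      by_contra hne
      exact (hΩ.dotProduct_mulVec_pos hne).ne' e1
    refine ⟨hBy, ?_⟩
    have hA₀y : A₀ᴴ *ᵥ y = Aᴴ *ᵥ y := by
      rw [hA₀]
      have : ((1 - B * Γ) * A)ᴴ = Aᴴ * (1 - Γᴴ * Bᴴ) := by
        simp [Matrix.mul_sub, Matrix.sub_mul, Matrix.conjTranspose_mul]
      rw [this, ← Matrix.mulVec_mulVec, Matrix.sub_mulVec, Matrix.one_mulVec,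
        ← Matrix.mulVec_mulVec, hBy, Matrix.mulVec_zero, sub_zero]
    rwa [hA₀y] at e2
  -- by induction, all iterates are in the kernel of the quadratic form
  have key : ∀ k : ℕ, star ((Aᴴ ^ k) *ᵥ x) ⬝ᵥ R *ᵥ ((Aᴴ ^ k) *ᵥ x) = 0 := by
    intro k
    induction k with
    | zero => simpa using h.symm
    | succ k ih =>
        have h2 := (step _ ih).2
        rw [pow_succ', ← Matrix.mulVec_mulVec]
        exact h2
  have hBk : ∀ k : ℕ, Bᴴ *ᵥ ((Aᴴ ^ k) *ᵥ x) = 0 := fun k => (step _ (key k)).1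
  -- hence Mᴴ x = 0
  have hMx : Mᴴ *ᵥ x = 0 := by
    funext p
    have := congrFun (hBk p.1) p.2
    simp only [Pi.zero_apply] at this ⊢
    rw [Matrix.mulVec_mulVec] at this
    calc (Mᴴ *ᵥ x) p = ((A ^ (p.1:ℕ) * B)ᴴ *ᵥ x) p.2 := by
          simp [Matrix.mulVec, dotProduct, conjTranspose_apply, hM]
      _ = 0 := by
          rw [Matrix.conjTranspose_mul, Matrix.conjTranspose_pow]
          exact this
  -- but Mᴴ has full column rank, so x = 0
  have hrank : Mᴴ.rank = n := by rw [Matrix.rank_conjTranspose]; exact hreach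
  have hker : LinearMap.ker Mᴴ.mulVecLin = ⊥ := by
    have h1 := LinearMap.finrank_range_add_finrank_ker Mᴴ.mulVecLin
    rw [Matrix.rank] at hrank
    rw [hrank] at h1
    simp only [Module.finrank_fintype_fun_eq_card, Fintype.card_fin] at h1
    have : Module.finrank ℂ (LinearMap.ker Mᴴ.mulVecLin) = 0 := by omega
    exact Submodule.finrank_eq_zero.mp this
  have : x ∈ LinearMap.ker Mᴴ.mulVecLin := by
    simpa [Matrix.mulVecLin_apply] using hMx
  rw [hker] at this
  exact hx (by simpa using this)
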